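/- arXiv:2101.05394 — 2 statements merged into one kernel-verified Lean document; each statement's English description precedes it below -/
import Mathlib

section
/- Let τ, α, ν > 0 and let z ∈ [-1,1]. Then (1/B(α,ν)) ∫₀¹ ((1-δ)/(1-δ z))^τ δ^{α-1} (1-δ)^{ν-1} dδ = (B(α,ν+τ)/B(α,ν)) · Σ_{n=0}^∞ (τ)_n (α)_n / ((α+ν+τ)_n · n!) · z^n, where the series on the right-hand side converges. -/
open Real MeasureTheory

/-- Euler Beta function `B(a,b) = Γ(a)Γ(b)/Γ(a+b)`. -/
noncomputable def betaFn (a b : ℝ) : ℝ := Real.Gamma a * Real.Gamma b / Real.Gamma (a + b)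

/-- Pochhammer symbol (rising factorial) `(x)_n = x(x+1)⋯(x+n-1)`. -/
noncomputable def poch (x : ℝ) (n : ℕ) : ℝ := Polynomial.eval x (ascPochhammer ℝ n)

/-- The Beta mixture of negative-binomial kernels evaluated at `z ∈ [-1,1]`:
`(1/B(α,ν)) ∫₀¹ ((1-δ)/(1-δz))^τ δ^{α-1} (1-δ)^{ν-1} dδ`. -/
noncomputable def betaMix (τ α ν z : ℝ) : ℝ :=
  (1 / betaFn α ν) * ∫ δ in Set.Ioo (0:ℝ) 1,
    ((1 - δ) / (1 - δ * z)) ^ τ * δ ^ (α - 1) * (1 - δ) ^ (ν - 1)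

open Set


lemma poch_zero (x : ℝ) : poch x 0 = 1 := by simp [poch]

lemma poch_succ (x : ℝ) (n : ℕ) : poch x (n + 1) = poch x n * (x + n) := by
  simp [poch, ascPochhammer_succ_eval]

lemma poch_pos {x : ℝ} (hx : 0 < x) (n : ℕ) : 0 < poch x n := by
  induction n with
  | zero => simp [poch_zero]
  | succ n ih =>
    rw [poch_succ]
    exact mul_pos ih (by positivity)

lemma Gamma_add_nat {x : ℝ} (hx : 0 < x) (n : ℕ) :
    Real.Gamma (x + n) = poch x n * Real.Gamma x := by
  induction n with
  | zero => simp [poch_zero]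
  | succ n ih =>
    have h : x + ((n : ℝ) + 1) = (x + n) + 1 := by ring
    push_cast
    rw [h, Real.Gamma_add_one (by positivity), ih, poch_succ]
    ring

lemma betaFn_pos {a b : ℝ} (ha : 0 < a) (hb : 0 < b) : 0 < betaFn a b := by
  unfold betaFn
  have := Real.Gamma_pos_of_pos ha
  have := Real.Gamma_pos_of_pos hb
  have := Real.Gamma_pos_of_pos (show 0 < a + b by positivity)
  positivity

lemma betaFn_add_nat {a b : ℝ} (ha : 0 < a) (hb : 0 < b) (n : ℕ) :
    betaFn (a + n) b = betaFn a b * poch a n / poch (a + b) n := by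
  unfold betaFn
  rw [Gamma_add_nat ha n, show a + (n : ℝ) + b = (a + b) + n by ring,
    Gamma_add_nat (show 0 < a + b by positivity) n]
  have h1 := (Real.Gamma_pos_of_pos (show 0 < a + b by positivity)).ne'
  have h2 := (poch_pos (show 0 < a + b by positivity) n).ne'
  field_simp

lemma hasSum_integral_of_hasSum_norm {s : Set ℝ} (hs : MeasurableSet s)
    {f : ℕ → ℝ → ℝ} {g B : ℝ → ℝ}
    (hmeas : ∀ n, AEStronglyMeasurable (f n) (volume.restrict s))
    (hsum : ∀ x ∈ s, HasSum (fun n => f n x) (g x))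
    (hnorm : ∀ x ∈ s, HasSum (fun n => ‖f n x‖) (B x))
    (hBint : IntegrableOn B s) :
    HasSum (fun n => ∫ x in s, f n x) (∫ x in s, g x) := by
  apply MeasureTheory.hasSum_integral_of_dominated_convergence (fun n x => ‖f n x‖) hmeas
  · exact fun n => Filter.Eventually.of_forall fun x => le_rfl
  · rw [ae_restrict_iff' hs]
    exact Filter.Eventually.of_forall fun x hx => (hnorm x hx).summable
  · refine hBint.congr ?_
    rw [Filter.EventuallyEq, ae_restrict_iff' hs]
    exact Filter.Eventually.of_forall fun x hx => ((hnorm x hx).tsum_eq).symm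
  · rw [ae_restrict_iff' hs]
    exact Filter.Eventually.of_forall fun x hx => hsum x hx

lemma integrableOn_betaKernel {a b : ℝ} (ha : 0 < a) (hb : 0 < b) :
    IntegrableOn (fun x : ℝ => x ^ (a - 1) * (1 - x) ^ (b - 1)) (Ioo (0:ℝ) 1) := by
  have h : IntervalIntegrable
      (fun x => (x : ℂ) ^ ((a : ℂ) - 1) * (1 - (x : ℂ)) ^ ((b : ℂ) - 1) : ℝ → ℂ) volume 0 1 :=
    Complex.betaIntegral_convergent (by simpa using ha) (by simpa using hb)
  rw [intervalIntegrable_iff_integrableOn_Ioo_of_le zero_le_one] at h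
  have h2 : IntegrableOn (fun x : ℝ => ‖(x : ℂ) ^ ((a : ℂ) - 1) * (1 - (x : ℂ)) ^ ((b : ℂ) - 1)‖)
      (Ioo (0:ℝ) 1) := h.norm
  refine h2.congr_fun (fun x hx => ?_) measurableSet_Ioo
  obtain ⟨h0, h1⟩ := hx
  simp only [norm_mul]
  rw [show (1 - (x:ℂ)) = ((1 - x : ℝ) : ℂ) by push_cast; ring]
  rw [Complex.norm_cpow_eq_rpow_re_of_pos h0, Complex.norm_cpow_eq_rpow_re_of_pos (by linarith)]
  norm_num

lemma integral_betaKernel {a b : ℝ} (ha : 0 < a) (hb : 0 < b) :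
    ∫ x in Ioo (0:ℝ) 1, x ^ (a - 1) * (1 - x) ^ (b - 1) = betaFn a b := by
  have h0 : ∫ x in Ioo (0:ℝ) 1, x ^ (a - 1) * (1 - x) ^ (b - 1)
      = ∫ x in (0:ℝ)..1, x ^ (a - 1) * (1 - x) ^ (b - 1) := by
    rw [intervalIntegral.integral_of_le zero_le_one, integral_Ioc_eq_integral_Ioo]
  have hc : Complex.betaIntegral a b
      = ((∫ x in (0:ℝ)..1, x ^ (a - 1) * (1 - x) ^ (b - 1) : ℝ) : ℂ) := by
    rw [Complex.betaIntegral, ← intervalIntegral.integral_ofReal]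
    refine intervalIntegral.integral_congr fun x hx => ?_
    rw [uIcc_of_le zero_le_one] at hx
    obtain ⟨h0x, h1x⟩ := hx
    rw [Complex.ofReal_mul, Complex.ofReal_cpow h0x, Complex.ofReal_cpow (by linarith : (0:ℝ) ≤ 1 - x)]
    push_cast
    ring
  have key := Complex.Gamma_mul_Gamma_eq_betaIntegral
    (s := (a : ℂ)) (t := (b : ℂ)) (by simpa using ha) (by simpa using hb)
  rw [hc, ← Complex.ofReal_add, Complex.Gamma_ofReal, Complex.Gamma_ofReal,
    Complex.Gamma_ofReal, ← Complex.ofReal_mul, ← Complex.ofReal_mul] at key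
  have key' := Complex.ofReal_inj.mp key
  have hΓ := (Real.Gamma_pos_of_pos (show 0 < a + b by positivity)).ne'
  rw [h0]
  unfold betaFn
  rw [key']
  field_simp

lemma integrableOn_rpow_mul_exp_neg {r s : ℝ} (hr : 0 < r) (hs : -1 < s) :
    IntegrableOn (fun t : ℝ => t ^ s * Real.exp (-(r * t))) (Ioi (0:ℝ)) := by
  have := integrableOn_rpow_mul_exp_neg_mul_rpow hs zero_lt_one hr
  simpa [Real.rpow_one, neg_mul] using this

lemma hasSum_binomial {τ x : ℝ} (hτ : 0 < τ) (hx : |x| < 1) :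
    HasSum (fun n : ℕ => poch τ n / n.factorial * x ^ n) ((1 - x) ^ (-τ)) := by
  have hx1 : x < 1 := lt_of_le_of_lt (le_abs_self x) hx
  have h1x : 0 < 1 - x := by linarith
  have h1x' : 0 < 1 - |x| := by linarith
  have hΓ : 0 < Real.Gamma τ := Real.Gamma_pos_of_pos hτ
  set f : ℕ → ℝ → ℝ := fun n t => x ^ n / n.factorial * (t ^ (τ + n - 1) * Real.exp (-t)) with hf
  have hmeas : ∀ n, AEStronglyMeasurable (f n) (volume.restrict (Ioi (0:ℝ))) := by
    intro n
    refine ContinuousOn.aestronglyMeasurable ?_ measurableSet_Ioi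
    exact continuousOn_const.mul ((continuousOn_id.rpow_const
      (fun t ht => Or.inl (ne_of_gt ht))).mul
      (Real.continuous_exp.comp continuous_neg).continuousOn)
  have hpow : ∀ t : ℝ, 0 < t → ∀ n : ℕ, t ^ (τ + n - 1) = t ^ n * t ^ (τ - 1) := by
    intro t ht n
    rw [← Real.rpow_natCast t n, ← Real.rpow_add ht]
    ring_nf
  have hexp : ∀ y t : ℝ, Real.exp (y * t) * (t ^ (τ - 1) * Real.exp (-t))
      = t ^ (τ - 1) * Real.exp (-((1 - y) * t)) := by
    intro y t
    have e : Real.exp (y * t) * Real.exp (-t) = Real.exp (-((1 - y) * t)) := by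
      rw [← Real.exp_add]
      congr 1
      ring
    calc Real.exp (y * t) * (t ^ (τ - 1) * Real.exp (-t))
        = t ^ (τ - 1) * (Real.exp (y * t) * Real.exp (-t)) := by ring
      _ = t ^ (τ - 1) * Real.exp (-((1 - y) * t)) := by rw [e]
  have key : HasSum (fun n => ∫ t in Ioi (0:ℝ), f n t)
      (∫ t in Ioi (0:ℝ), t ^ (τ - 1) * Real.exp (-((1 - x) * t))) := by
    apply hasSum_integral_of_hasSum_norm
      (B := fun t => t ^ (τ - 1) * Real.exp (-((1 - |x|) * t))) measurableSet_Ioi hmeas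
    · intro t ht
      rw [mem_Ioi] at ht
      have h1 : HasSum (fun n : ℕ => (x * t) ^ n / n.factorial) (Real.exp (x * t)) := by
        rw [Real.exp_eq_exp_ℝ]
        exact NormedSpace.expSeries_div_hasSum_exp (x * t)
      have h2 := h1.mul_right (t ^ (τ - 1) * Real.exp (-t))
      have hfun : (fun n => f n t)
          = fun n : ℕ => (x * t) ^ n / n.factorial * (t ^ (τ - 1) * Real.exp (-t)) := by
        funext n
        rw [hf]
        simp only
        rw [hpow t ht n, mul_pow]
        ring
      rw [hfun, ← hexp x t]
      exact h2
    · intro t ht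
      rw [mem_Ioi] at ht
      have h1 : HasSum (fun n : ℕ => (|x| * t) ^ n / n.factorial) (Real.exp (|x| * t)) := by
        rw [Real.exp_eq_exp_ℝ]
        exact NormedSpace.expSeries_div_hasSum_exp (|x| * t)
      have h2 := h1.mul_right (t ^ (τ - 1) * Real.exp (-t))
      have hfun : (fun n => ‖f n t‖)
          = fun n : ℕ => (|x| * t) ^ n / n.factorial * (t ^ (τ - 1) * Real.exp (-t)) := by
        funext n
        rw [hf]
        simp only [Real.norm_eq_abs, abs_mul, abs_div, abs_pow, Nat.abs_cast,
          abs_of_nonneg (Real.exp_pos (-t)).le, abs_of_nonneg (Real.rpow_nonneg ht.le _)]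
        rw [hpow t ht n, mul_pow]
        ring
      rw [hfun, ← hexp |x| t]
      exact h2
    · exact integrableOn_rpow_mul_exp_neg h1x' (by linarith)
  have hterm : ∀ n : ℕ, ∫ t in Ioi (0:ℝ), f n t
      = (poch τ n / n.factorial * x ^ n) * Real.Gamma τ := by
    intro n
    rw [hf]
    simp only
    rw [MeasureTheory.integral_const_mul]
    have h := Real.integral_rpow_mul_exp_neg_mul_Ioi (a := τ + n) (r := 1)
      (by positivity) one_pos
    simp only [one_mul, one_div, inv_one, Real.one_rpow] at h
    rw [h, Gamma_add_nat hτ n]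
    ring
  have htot : ∫ t in Ioi (0:ℝ), t ^ (τ - 1) * Real.exp (-((1 - x) * t))
      = (1 - x) ^ (-τ) * Real.Gamma τ := by
    have h := Real.integral_rpow_mul_exp_neg_mul_Ioi (a := τ) (r := 1 - x) hτ h1x
    rw [h, one_div, Real.inv_rpow h1x.le, ← Real.rpow_neg h1x.le]
  rw [funext hterm, htot] at key
  have key2 := key.mul_right (Real.Gamma τ)⁻¹
  simpa [mul_assoc, mul_inv_cancel₀ hΓ.ne'] using key2

/-- For `τ, α, ν > 0` and `z ∈ [-1,1]`, the Beta mixture equals the convergent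
Gauss hypergeometric series `(B(α,ν+τ)/B(α,ν)) Σ_n (τ)_n (α)_n / ((α+ν+τ)_n n!) z^n`. -/
theorem betaMix_eq_hypergeometric (τ α ν : ℝ) (hτ : 0 < τ) (hα : 0 < α) (hν : 0 < ν)
    (z : ℝ) (hz : z ∈ Set.Icc (-1:ℝ) 1) :
    HasSum
      (fun n : ℕ => betaFn α (ν + τ) / betaFn α ν *
        (poch τ n * poch α n / (poch (α + ν + τ) n * n.factorial)) * z ^ n)
      (betaMix τ α ν z) := by
  obtain ⟨hz1, hz2⟩ := hz
  have hzabs : |z| ≤ 1 := abs_le.mpr ⟨hz1, hz2⟩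
  set b := ν + τ with hb
  have hbpos : 0 < b := by positivity
  set f : ℕ → ℝ → ℝ := fun n δ =>
    poch τ n / n.factorial * (δ * z) ^ n * (δ ^ (α - 1) * (1 - δ) ^ (b - 1)) with hfdef
  have hpowsplit : ∀ δ : ℝ, 0 < δ → ∀ n : ℕ, δ ^ (α + n - 1) = δ ^ n * δ ^ (α - 1) := by
    intro δ hδ n
    rw [← Real.rpow_natCast δ n, ← Real.rpow_add hδ]
    ring_nf
  have key : HasSum (fun n => ∫ δ in Ioo (0:ℝ) 1, f n δ)
      (∫ δ in Ioo (0:ℝ) 1, ((1 - δ) / (1 - δ * z)) ^ τ * δ ^ (α - 1) * (1 - δ) ^ (ν - 1)) := by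
    apply hasSum_integral_of_hasSum_norm
      (B := fun δ => (1 - δ * |z|) ^ (-τ) * (δ ^ (α - 1) * (1 - δ) ^ (b - 1)))
      measurableSet_Ioo
    · intro n
      refine ContinuousOn.aestronglyMeasurable ?_ measurableSet_Ioo
      refine ContinuousOn.mul (Continuous.continuousOn (by continuity)) ?_
      exact (continuousOn_id.rpow_const fun δ hδ => Or.inl (ne_of_gt hδ.1)).mul
        ((continuousOn_const.sub continuousOn_id).rpow_const
          fun δ hδ => Or.inl (ne_of_gt (by simp only [Pi.sub_apply, id]; linarith [hδ.2])))
    · intro δ hδ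
      obtain ⟨h0, h1⟩ := hδ
      have hδz : |δ * z| < 1 := by
        rw [abs_mul, abs_of_nonneg h0.le]
        calc δ * |z| ≤ δ * 1 := mul_le_mul_of_nonneg_left hzabs h0.le
          _ < 1 := by linarith
      have h1δz : 0 < 1 - δ * z := by
        have := (abs_lt.mp hδz).2
        linarith
      have hval : (1 - δ * z) ^ (-τ) * (δ ^ (α - 1) * (1 - δ) ^ (b - 1))
          = ((1 - δ) / (1 - δ * z)) ^ τ * δ ^ (α - 1) * (1 - δ) ^ (ν - 1) := by
        rw [Real.div_rpow (by linarith) h1δz.le, Real.rpow_neg h1δz.le,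
          show b - 1 = τ + (ν - 1) by rw [hb]; ring,
          Real.rpow_add (show (0:ℝ) < 1 - δ by linarith), div_eq_mul_inv]
        ring
      rw [← hval]
      exact (hasSum_binomial hτ hδz).mul_right _
    · intro δ hδ
      obtain ⟨h0, h1⟩ := hδ
      have hW : 0 ≤ δ ^ (α - 1) * (1 - δ) ^ (b - 1) :=
        mul_nonneg (Real.rpow_nonneg h0.le _) (Real.rpow_nonneg (by linarith) _)
      have hδz' : abs (δ * |z|) < 1 := by
        rw [abs_of_nonneg (mul_nonneg h0.le (abs_nonneg z))]
        calc δ * |z| ≤ δ * 1 := mul_le_mul_of_nonneg_left hzabs h0.le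
          _ < 1 := by linarith
      have hfun : (fun n => ‖f n δ‖)
          = fun n : ℕ => poch τ n / n.factorial * (δ * |z|) ^ n
              * (δ ^ (α - 1) * (1 - δ) ^ (b - 1)) := by
        funext n
        rw [hfdef]
        simp only [Real.norm_eq_abs, abs_mul, abs_div, abs_pow, Nat.abs_cast,
          abs_of_nonneg (poch_pos hτ n).le, abs_of_nonneg h0.le, abs_of_nonneg hW,
          abs_of_nonneg (Real.rpow_nonneg h0.le (α - 1)),
          abs_of_nonneg (Real.rpow_nonneg (show (0:ℝ) ≤ 1 - δ by linarith) (b - 1))]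
      rw [hfun]
      exact (hasSum_binomial hτ hδz').mul_right _
    · refine Integrable.mono' (integrableOn_betaKernel hα hν) ?_ ?_
      · refine ContinuousOn.aestronglyMeasurable ?_ measurableSet_Ioo
        refine ContinuousOn.mul ?_ ?_
        · refine (continuousOn_const.sub (continuousOn_id.mul continuousOn_const)).rpow_const
            fun δ hδ => Or.inl (ne_of_gt ?_)
          simp only [Pi.sub_apply, Pi.mul_apply, id]
          have : δ * |z| ≤ δ * 1 := mul_le_mul_of_nonneg_left hzabs hδ.1.le
          have := hδ.2
          linarith
        · exact (continuousOn_id.rpow_const fun δ hδ => Or.inl (ne_of_gt hδ.1)).mul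
            ((continuousOn_const.sub continuousOn_id).rpow_const
              fun δ hδ => Or.inl (ne_of_gt (by simp only [Pi.sub_apply, id]; linarith [hδ.2])))
      · rw [ae_restrict_iff' measurableSet_Ioo]
        refine Filter.Eventually.of_forall fun δ hδ => ?_
        obtain ⟨h0, h1⟩ := hδ
        have h1δ : (0:ℝ) < 1 - δ := by linarith
        have h1δz : 0 < 1 - δ * |z| := by
          have : δ * |z| ≤ δ * 1 := mul_le_mul_of_nonneg_left hzabs h0.le
          linarith
        have hW : 0 ≤ δ ^ (α - 1) * (1 - δ) ^ (b - 1) :=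
          mul_nonneg (Real.rpow_nonneg h0.le _) (Real.rpow_nonneg h1δ.le _)
        have hBnn : (0:ℝ) ≤ (1 - δ * |z|) ^ (-τ) * (δ ^ (α - 1) * (1 - δ) ^ (b - 1)) :=
          mul_nonneg (Real.rpow_nonneg h1δz.le _) hW
        rw [Real.norm_eq_abs, abs_of_nonneg hBnn]
        have hle : (1 - δ * |z|) ^ (-τ) ≤ (1 - δ) ^ (-τ) := by
          refine Real.rpow_le_rpow_of_nonpos h1δ ?_ (by linarith)
          have : δ * |z| ≤ δ * 1 := mul_le_mul_of_nonneg_left hzabs h0.le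
          linarith
        calc (1 - δ * |z|) ^ (-τ) * (δ ^ (α - 1) * (1 - δ) ^ (b - 1))
            ≤ (1 - δ) ^ (-τ) * (δ ^ (α - 1) * (1 - δ) ^ (b - 1)) :=
              mul_le_mul_of_nonneg_right hle hW
          _ = δ ^ (α - 1) * (1 - δ) ^ (ν - 1) := by
              rw [show (δ:ℝ) ^ (α - 1) * (1 - δ) ^ (b - 1)
                  = δ ^ (α - 1) * (1 - δ) ^ (b - 1) from rfl]
              rw [mul_comm ((1 - δ) ^ (-τ)), mul_assoc, ← Real.rpow_add h1δ,
                show b - 1 + -τ = ν - 1 by rw [hb]; ring]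
  have hterm : ∀ n : ℕ, ∫ δ in Ioo (0:ℝ) 1, f n δ
      = poch τ n / n.factorial * z ^ n * betaFn (α + n) b := by
    intro n
    have heq : ∀ δ ∈ Ioo (0:ℝ) 1, f n δ
        = (poch τ n / n.factorial * z ^ n) * (δ ^ (α + n - 1) * (1 - δ) ^ (b - 1)) := by
      intro δ hδ
      rw [hfdef]
      simp only
      rw [mul_pow, hpowsplit δ hδ.1 n]
      ring
    rw [setIntegral_congr_fun measurableSet_Ioo heq, MeasureTheory.integral_const_mul,
      integral_betaKernel (by positivity) hbpos]
  rw [funext hterm] at key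
  have final := key.mul_left (1 / betaFn α ν)
  have hfinfun : (fun n : ℕ => betaFn α b / betaFn α ν *
        (poch τ n * poch α n / (poch (α + ν + τ) n * n.factorial)) * z ^ n)
      = fun n : ℕ => 1 / betaFn α ν *
          (poch τ n / n.factorial * z ^ n * betaFn (α + n) b) := by
    funext n
    rw [betaFn_add_nat hα hbpos n, show α + b = α + ν + τ by rw [hb]; ring]
    have h1 := (betaFn_pos hα hν).ne'
    have h2 := (poch_pos (show (0:ℝ) < α + ν + τ by positivity) n).ne'
    have h3 : (n.factorial : ℝ) ≠ 0 := Nat.cast_ne_zero.mpr n.factorial_ne_zero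
    rw [hb]
    field_simp
  rw [hfinfun]
  exact final
end

section
/- Let τ, α > 0 and ν = 1, and let F_{τ,α,1}(θ) = (1/B(α,1)) ∫₀¹ ((1-δ)/(1-δ cos θ))^τ δ^{α-1} dδ. Then for every a ∈ (0,2] there is no constant b > 0 such that lim_{θ → 0+} (F_{τ,α,1}(0) - F_{τ,α,1}(θ)) / θ^a = b; that is, the fractal index of F_{τ,α,1} does not exist. More precisely, the limit of (F_{τ,α,1}(0) - F_{τ,α,1}(θ))/θ^a as θ → 0+ is 0 for every a ∈ (0,2) and is +∞ for a = 2. -/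
open Real MeasureTheory Filter
open Set

/-- The `F`-family correlation function. -/
noncomputable def Ffam (τ α ν θ : ℝ) : ℝ :=
  (1 / betaFn α ν) * ∫ δ in Set.Ioo (0:ℝ) 1,
    ((1 - δ) / (1 - δ * Real.cos θ)) ^ τ * δ ^ (α - 1) * (1 - δ) ^ (ν - 1)

section AuxLemmas

variable {τ α : ℝ}

lemma aux_upper {t x : ℝ} (ht : 0 < t) (hx : 0 ≤ x) : 1 - (1 + x) ^ (-t) ≤ t * x := by
  have h1 : (0:ℝ) < 1 + x := by linarith
  have hlog : Real.log (1 + x) ≤ x := by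
    have := Real.log_le_sub_one_of_pos h1; linarith
  have h2 : Real.exp (-(t*x)) ≤ (1+x) ^ (-t) := by
    rw [Real.rpow_def_of_pos h1]
    apply Real.exp_le_exp.mpr
    nlinarith
  have h3 : 1 - t*x ≤ Real.exp (-(t*x)) := by linarith [Real.add_one_le_exp (-(t*x))]
  linarith

lemma aux_lower {t x : ℝ} (ht : 0 < t) (hx : 0 ≤ x) (hx1 : x ≤ 1) :
    t / (2 + t) * x ≤ 1 - (1 + x) ^ (-t) := by
  have h1 : (0:ℝ) < 1 + x := by linarith
  have hlog : x / 2 ≤ Real.log (1 + x) := by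
    have h := Real.log_le_sub_one_of_pos (show (0:ℝ) < (1+x)⁻¹ by positivity)
    rw [Real.log_inv] at h
    have h2 : (1+x)⁻¹ - 1 = -(x/(1+x)) := by field_simp; ring
    rw [h2] at h
    have h3 : x / 2 ≤ x / (1+x) := by
      rw [div_le_div_iff₀ (by norm_num) h1]; nlinarith
    linarith
  set z : ℝ := t * x / 2 with hz
  have hz0 : 0 ≤ z := by positivity
  have hz1 : (0:ℝ) < 1 + z := by linarith
  have h4 : (1+x) ^ (-t) ≤ Real.exp (-z) := by
    rw [Real.rpow_def_of_pos h1]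
    apply Real.exp_le_exp.mpr
    rw [hz]; nlinarith
  have h5 : Real.exp (-z) ≤ (1+z)⁻¹ := by
    rw [Real.exp_neg]
    exact inv_anti₀ (by linarith) (by linarith [Real.add_one_le_exp z])
  have h6 : t / (2 + t) * x ≤ 1 - (1+z)⁻¹ := by
    have h7 : 1 - (1+z)⁻¹ = z/(1+z) := by field_simp; ring
    rw [h7, div_mul_eq_mul_div, div_le_div_iff₀ (by linarith) hz1, hz]
    nlinarith [mul_nonneg (mul_nonneg (mul_pos ht ht).le hx) (sub_nonneg.mpr hx1)]
  linarith

lemma min_le_rpow {y s : ℝ} (hy : 0 ≤ y) (hs0 : 0 < s) (hs1 : s ≤ 1) : min 1 y ≤ y ^ s := by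
  rcases le_or_gt 1 y with h | h
  · calc min 1 y ≤ 1 := min_le_left _ _
      _ ≤ y ^ s := Real.one_le_rpow h hs0.le
  · rcases eq_or_lt_of_le hy with h0 | h0
    · simp [← h0, Real.zero_rpow hs0.ne']
    · calc min 1 y ≤ y := min_le_right _ _
        _ = y ^ (1:ℝ) := (Real.rpow_one y).symm
        _ ≤ y ^ s := Real.rpow_le_rpow_of_exponent_ge h0 h.le hs1

lemma integrableOn_aux {p q : ℝ} (hp : -1 < p) (hq : -1 < q) :
    IntegrableOn (fun x : ℝ => x ^ p * (1 - x) ^ q) (Set.Ioo 0 1) := by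
  have key : ∀ p' q' : ℝ, -1 < p' → IntervalIntegrable
      (fun x : ℝ => x ^ p' * (1 - x) ^ q') volume 0 (1/2) := by
    intro p' q' hp'
    apply (intervalIntegral.intervalIntegrable_rpow' hp').mul_continuousOn
    apply ContinuousOn.rpow_const (continuous_const.sub continuous_id).continuousOn
    intro x hx
    rw [uIcc_of_le (by norm_num : (0:ℝ) ≤ 1/2)] at hx
    exact Or.inl (by intro h; simp only [Pi.sub_apply] at h; rw [sub_eq_zero] at h; simp only [id_eq] at h; linarith [hx.2])
  have h1 := key p q hp
  have h2 : IntervalIntegrable (fun x : ℝ => x ^ p * (1 - x) ^ q) volume (1/2) 1 := by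
    have h3 := ((key q p hq).comp_sub_left 1).symm
    norm_num at h3
    have he : (fun x : ℝ => (1-x) ^ q * x ^ p) = fun x : ℝ => x ^ p * (1 - x) ^ q := by
      funext x; ring
    rwa [he] at h3
  have h4 := (h1.trans h2)
  rw [intervalIntegrable_iff_integrableOn_Ioc_of_le (by norm_num)] at h4
  exact h4.mono_set Set.Ioo_subset_Ioc_self

variable {τ α : ℝ}

lemma denom_pos (θ : ℝ) {δ : ℝ} (hδ : δ ∈ Set.Ioo (0:ℝ) 1) : 0 < 1 - δ * Real.cos θ := by
  have h := mul_le_mul_of_nonneg_left (Real.cos_le_one θ) hδ.1.le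
  rw [mul_one] at h
  linarith [hδ.2]

lemma r_nonneg (θ : ℝ) {δ : ℝ} (hδ : δ ∈ Set.Ioo (0:ℝ) 1) :
    0 ≤ (1 - δ) / (1 - δ * Real.cos θ) :=
  div_nonneg (by linarith [hδ.2]) (denom_pos θ hδ).le

lemma r_le_one (θ : ℝ) {δ : ℝ} (hδ : δ ∈ Set.Ioo (0:ℝ) 1) :
    (1 - δ) / (1 - δ * Real.cos θ) ≤ 1 := by
  rw [div_le_one (denom_pos θ hδ)]
  have h := mul_le_mul_of_nonneg_left (Real.cos_le_one θ) hδ.1.le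
  rw [mul_one] at h
  linarith

lemma r_rpow_eq (θ : ℝ) {δ : ℝ} (hδ : δ ∈ Set.Ioo (0:ℝ) 1) :
    ((1 - δ) / (1 - δ * Real.cos θ)) ^ τ
      = (1 + δ * (1 - Real.cos θ) / (1 - δ)) ^ (-τ) := by
  have h1 : (0:ℝ) < 1 - δ := by linarith [hδ.2]
  have h2 := denom_pos θ hδ
  have h3 : 1 + δ * (1 - Real.cos θ) / (1 - δ) = ((1 - δ) / (1 - δ * Real.cos θ))⁻¹ := by
    rw [inv_div]
    field_simp
    ring
  rw [h3, Real.inv_rpow (r_nonneg θ hδ), Real.rpow_neg (r_nonneg θ hδ), inv_inv]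

lemma f_contOn (hτ : 0 < τ) (θ : ℝ) :
    ContinuousOn (fun δ : ℝ => ((1 - δ) / (1 - δ * Real.cos θ)) ^ τ * δ ^ (α - 1))
      (Set.Ioo 0 1) := by
  apply ContinuousOn.mul
  · apply ContinuousOn.rpow_const
    · apply ContinuousOn.div ((continuous_const.sub continuous_id).continuousOn)
        ((continuous_const.sub (continuous_id.mul continuous_const)).continuousOn)
      intro δ hδ
      exact (denom_pos θ hδ).ne'
    · intro δ hδ; exact Or.inr hτ.le
  · exact ContinuousOn.rpow_const continuousOn_id (fun δ hδ => Or.inl hδ.1.ne')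

lemma intOn_rpow (hα : 0 < α) : IntegrableOn (fun x : ℝ => x ^ (α - 1)) (Set.Ioo 0 1) := by
  have h := intervalIntegral.intervalIntegrable_rpow'
    (show (-1:ℝ) < α - 1 by linarith) (a := 0) (b := 1)
  rw [intervalIntegrable_iff_integrableOn_Ioc_of_le (by norm_num)] at h
  exact h.mono_set Set.Ioo_subset_Ioc_self

lemma intOn_f (hτ : 0 < τ) (hα : 0 < α) (θ : ℝ) :
    IntegrableOn (fun δ : ℝ => ((1 - δ) / (1 - δ * Real.cos θ)) ^ τ * δ ^ (α - 1))
      (Set.Ioo 0 1) := by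
  apply Integrable.mono' (intOn_rpow hα)
    ((f_contOn hτ θ).aestronglyMeasurable measurableSet_Ioo)
  rw [ae_restrict_iff' measurableSet_Ioo]
  filter_upwards with δ hδ
  have h1 : 0 ≤ ((1 - δ) / (1 - δ * Real.cos θ)) ^ τ * δ ^ (α - 1) :=
    mul_nonneg (Real.rpow_nonneg (r_nonneg θ hδ) τ) (Real.rpow_nonneg hδ.1.le _)
  rw [Real.norm_eq_abs, abs_of_nonneg h1]
  exact mul_le_of_le_one_left (Real.rpow_nonneg hδ.1.le _)
    (Real.rpow_le_one (r_nonneg θ hδ) (r_le_one θ hδ) hτ.le)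

lemma one_div_betaFn (hα : 0 < α) : 1 / betaFn α 1 = α := by
  have h1 : Real.Gamma (α + 1) = α * Real.Gamma α := Real.Gamma_add_one hα.ne'
  have h2 : Real.Gamma α ≠ 0 := (Real.Gamma_pos_of_pos hα).ne'
  rw [betaFn, Real.Gamma_one, h1]
  field_simp

lemma Ffam_eq (hα : 0 < α) (θ : ℝ) : Ffam τ α 1 θ =
    α * ∫ δ in Set.Ioo (0:ℝ) 1, ((1 - δ) / (1 - δ * Real.cos θ)) ^ τ * δ ^ (α - 1) := by
  rw [Ffam, one_div_betaFn hα]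
  congr 1
  refine setIntegral_congr_fun measurableSet_Ioo (fun δ hδ => ?_)
  rw [sub_self, Real.rpow_zero, mul_one]

lemma int_rpow (hα : 0 < α) : ∫ δ in Set.Ioo (0:ℝ) 1, δ ^ (α - 1) = 1 / α := by
  rw [← integral_Ioc_eq_integral_Ioo,
    ← intervalIntegral.integral_of_le (by norm_num : (0:ℝ) ≤ 1),
    integral_rpow (Or.inl (by linarith))]
  rw [sub_add_cancel, Real.one_rpow, Real.zero_rpow (by linarith)]
  norm_num

lemma Ffam_zero (hα : 0 < α) : Ffam τ α 1 0 = 1 := by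
  rw [Ffam_eq hα]
  have h : ∫ δ in Set.Ioo (0:ℝ) 1, ((1 - δ) / (1 - δ * Real.cos 0)) ^ τ * δ ^ (α - 1)
      = ∫ δ in Set.Ioo (0:ℝ) 1, δ ^ (α - 1) := by
    refine setIntegral_congr_fun measurableSet_Ioo (fun δ hδ => ?_)
    rw [Real.cos_zero, mul_one, div_self (by linarith [hδ.2] : (1:ℝ) - δ ≠ 0),
      Real.one_rpow, one_mul]
  rw [h, int_rpow hα]
  field_simp

lemma intOn_g (hτ : 0 < τ) (hα : 0 < α) (θ : ℝ) :
    IntegrableOn (fun δ : ℝ => (1 - ((1 - δ) / (1 - δ * Real.cos θ)) ^ τ) * δ ^ (α - 1))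
      (Set.Ioo 0 1) := by
  have h := (intOn_rpow hα).sub (intOn_f hτ hα θ)
  simp only [Pi.sub_def] at h
  have he : (fun δ : ℝ => δ ^ (α - 1) - ((1 - δ) / (1 - δ * Real.cos θ)) ^ τ * δ ^ (α - 1))
      = fun δ : ℝ => (1 - ((1 - δ) / (1 - δ * Real.cos θ)) ^ τ) * δ ^ (α - 1) := by
    funext δ; ring
  rwa [he] at h

lemma D_repr (hτ : 0 < τ) (hα : 0 < α) (θ : ℝ) :
    Ffam τ α 1 0 - Ffam τ α 1 θ
      = α * ∫ δ in Set.Ioo (0:ℝ) 1,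
          (1 - ((1 - δ) / (1 - δ * Real.cos θ)) ^ τ) * δ ^ (α - 1) := by
  rw [Ffam_zero hα, Ffam_eq hα]
  have h : ∫ δ in Set.Ioo (0:ℝ) 1, (1 - ((1 - δ) / (1 - δ * Real.cos θ)) ^ τ) * δ ^ (α - 1)
      = (∫ δ in Set.Ioo (0:ℝ) 1, δ ^ (α - 1))
        - ∫ δ in Set.Ioo (0:ℝ) 1, ((1 - δ) / (1 - δ * Real.cos θ)) ^ τ * δ ^ (α - 1) := by
    rw [← integral_sub (intOn_rpow hα) (intOn_f hτ hα θ)]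
    congr 1; funext δ; ring
  rw [h, int_rpow hα, mul_sub, mul_one_div, div_self hα.ne']

lemma g_le (hτ : 0 < τ) {s : ℝ} (hs0 : 0 < s) (hs1 : s ≤ 1) (θ : ℝ) {δ : ℝ}
    (hδ : δ ∈ Set.Ioo (0:ℝ) 1) :
    (1 - ((1 - δ) / (1 - δ * Real.cos θ)) ^ τ) * δ ^ (α - 1)
      ≤ (τ ^ s * (1 - Real.cos θ) ^ s) * (δ ^ (α - 1) * (1 - δ) ^ (-s)) := by
  have h1 : (0:ℝ) < 1 - δ := by linarith [hδ.2]
  have he : 0 ≤ 1 - Real.cos θ := by linarith [Real.cos_le_one θ]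
  set x : ℝ := δ * (1 - Real.cos θ) / (1 - δ) with hx
  have hx0 : 0 ≤ x := by rw [hx]; exact div_nonneg (mul_nonneg hδ.1.le he) h1.le
  have key : 1 - ((1 - δ) / (1 - δ * Real.cos θ)) ^ τ ≤ τ ^ s * (1 - Real.cos θ) ^ s * (1 - δ) ^ (-s) := by
    rw [r_rpow_eq θ hδ, ← hx]
    have h2 : 1 - (1 + x) ^ (-τ) ≤ min 1 (τ * x) := by
      refine le_min ?_ (aux_upper hτ hx0)
      have := Real.rpow_nonneg (show (0:ℝ) ≤ 1 + x by linarith) (-τ)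
      linarith
    have h3 : min 1 (τ * x) ≤ (τ * x) ^ s := min_le_rpow (by positivity) hs0 hs1
    have h4 : (τ * x) ^ s = τ ^ s * x ^ s := Real.mul_rpow hτ.le hx0
    have h5 : x ^ s ≤ ((1 - Real.cos θ) / (1 - δ)) ^ s := by
      apply Real.rpow_le_rpow hx0 _ hs0.le
      rw [hx, div_le_div_iff₀ h1 h1]
      nlinarith [mul_nonneg (mul_nonneg he h1.le) h1.le, hδ.2]
    have h6 : ((1 - Real.cos θ) / (1 - δ)) ^ s = (1 - Real.cos θ) ^ s * (1 - δ) ^ (-s) := by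
      rw [Real.div_rpow he h1.le, Real.rpow_neg h1.le, div_eq_mul_inv]
    calc 1 - (1 + x) ^ (-τ) ≤ min 1 (τ * x) := h2
      _ ≤ (τ * x) ^ s := h3
      _ = τ ^ s * x ^ s := h4
      _ ≤ τ ^ s * ((1 - Real.cos θ) / (1 - δ)) ^ s :=
          mul_le_mul_of_nonneg_left h5 (Real.rpow_nonneg hτ.le s)
      _ = τ ^ s * (1 - Real.cos θ) ^ s * (1 - δ) ^ (-s) := by rw [h6]; ring
  calc (1 - ((1 - δ) / (1 - δ * Real.cos θ)) ^ τ) * δ ^ (α - 1)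
      ≤ (τ ^ s * (1 - Real.cos θ) ^ s * (1 - δ) ^ (-s)) * δ ^ (α - 1) :=
        mul_le_mul_of_nonneg_right key (Real.rpow_nonneg hδ.1.le _)
    _ = (τ ^ s * (1 - Real.cos θ) ^ s) * (δ ^ (α - 1) * (1 - δ) ^ (-s)) := by ring

lemma D_upper (hτ : 0 < τ) (hα : 0 < α) {s : ℝ} (hs0 : 0 < s) (hs1 : s < 1) :
    ∃ C : ℝ, 0 ≤ C ∧ ∀ θ : ℝ,
      Ffam τ α 1 0 - Ffam τ α 1 θ ≤ C * (1 - Real.cos θ) ^ s := by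
  set C₀ : ℝ := ∫ δ in Set.Ioo (0:ℝ) 1, δ ^ (α - 1) * (1 - δ) ^ (-s) with hC₀
  have hint : IntegrableOn (fun δ : ℝ => δ ^ (α - 1) * (1 - δ) ^ (-s)) (Set.Ioo 0 1) :=
    integrableOn_aux (by linarith) (by linarith)
  have hC₀0 : 0 ≤ C₀ := setIntegral_nonneg measurableSet_Ioo
    (fun δ hδ => mul_nonneg (Real.rpow_nonneg hδ.1.le _)
      (Real.rpow_nonneg (by linarith [hδ.2]) _))
  refine ⟨α * (τ ^ s * C₀), by positivity, fun θ => ?_⟩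
  rw [D_repr hτ hα θ]
  have he : 0 ≤ 1 - Real.cos θ := by linarith [Real.cos_le_one θ]
  have hmono : (∫ δ in Set.Ioo (0:ℝ) 1,
        (1 - ((1 - δ) / (1 - δ * Real.cos θ)) ^ τ) * δ ^ (α - 1))
      ≤ ∫ δ in Set.Ioo (0:ℝ) 1,
        (τ ^ s * (1 - Real.cos θ) ^ s) * (δ ^ (α - 1) * (1 - δ) ^ (-s)) := by
    refine setIntegral_mono_on (intOn_g hτ hα θ) (hint.const_mul _) measurableSet_Ioo ?_
    exact fun δ hδ => g_le hτ hs0 hs1.le θ hδ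
  rw [integral_const_mul] at hmono
  calc α * ∫ δ in Set.Ioo (0:ℝ) 1,
        (1 - ((1 - δ) / (1 - δ * Real.cos θ)) ^ τ) * δ ^ (α - 1)
      ≤ α * (τ ^ s * (1 - Real.cos θ) ^ s * C₀) :=
        mul_le_mul_of_nonneg_left hmono hα.le
    _ = α * (τ ^ s * C₀) * (1 - Real.cos θ) ^ s := by ring

lemma rpow_lower (hα : 0 < α) {δ : ℝ} (h1 : 1/2 ≤ δ) (h2 : δ ≤ 1) (h0 : 0 < δ) :
    min 1 ((1/2:ℝ) ^ (α - 1)) ≤ δ ^ (α - 1) := by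
  rcases le_or_gt 1 α with h | h
  · calc min 1 ((1/2:ℝ) ^ (α - 1)) ≤ (1/2:ℝ) ^ (α - 1) := min_le_right _ _
      _ ≤ δ ^ (α - 1) := Real.rpow_le_rpow (by norm_num) h1 (by linarith)
  · calc min 1 ((1/2:ℝ) ^ (α - 1)) ≤ 1 := min_le_left _ _
      _ ≤ δ ^ (α - 1) :=
        Real.one_le_rpow_of_pos_of_le_one_of_nonpos h0 h2 (by linarith)

lemma D_lower (hτ : 0 < τ) (hα : 0 < α) :
    ∃ K : ℝ, 0 < K ∧ ∀ θ : ℝ, 0 < 1 - Real.cos θ → 1 - Real.cos θ < 1/2 →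
      K * ((1 - Real.cos θ) * Real.log ((1/2) / (1 - Real.cos θ)))
        ≤ Ffam τ α 1 0 - Ffam τ α 1 θ := by
  set c₁ : ℝ := min 1 ((1/2:ℝ) ^ (α - 1)) with hc₁
  have hc₁0 : 0 < c₁ := lt_min one_pos (Real.rpow_pos_of_pos (by norm_num) _)
  set K₁ : ℝ := τ / (2 + τ) * c₁ / 2 with hK₁
  have hK₁0 : 0 < K₁ := by
    apply div_pos (mul_pos (div_pos hτ (by linarith)) hc₁0) (by norm_num)
  refine ⟨α * K₁, mul_pos hα hK₁0, fun θ he0 he2 => ?_⟩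
  set e : ℝ := 1 - Real.cos θ with hee
  have hS : Set.Ioo (1/2:ℝ) (1 - e) ⊆ Set.Ioo (0:ℝ) 1 := by
    intro y hy
    constructor <;> [linarith [hy.1]; linarith [hy.2]]
  -- pointwise lower bound on S
  have hpt : ∀ δ ∈ Set.Ioo (1/2:ℝ) (1 - e),
      K₁ * (e * (1 - δ)⁻¹) ≤ (1 - ((1 - δ) / (1 - δ * Real.cos θ)) ^ τ) * δ ^ (α - 1) := by
    intro δ hδ
    have hδ' : δ ∈ Set.Ioo (0:ℝ) 1 := hS hδ
    have h1 : (0:ℝ) < 1 - δ := by linarith [hδ'.2]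
    have hue : e < 1 - δ := by linarith [hδ.2]
    set x : ℝ := δ * e / (1 - δ) with hx
    have hx0 : 0 ≤ x := by
      rw [hx]; exact div_nonneg (mul_nonneg hδ'.1.le he0.le) h1.le
    have hx1 : x ≤ 1 := by
      rw [hx, div_le_one h1]
      nlinarith [hδ'.2, hδ'.1]
    have hlow := aux_lower hτ hx0 hx1
    have hrr : ((1 - δ) / (1 - δ * Real.cos θ)) ^ τ = (1 + x) ^ (-τ) := by
      rw [r_rpow_eq θ hδ', hx, hee]
    rw [hrr]
    have hxlow : e / (1 - δ) / 2 ≤ x := by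
      rw [hx, div_div, div_le_div_iff₀ (by linarith) h1]
      nlinarith [mul_nonneg (mul_nonneg he0.le h1.le) (by linarith [hδ.1] : (0:ℝ) ≤ 2*δ - 1)]
    have hstep : K₁ * (e * (1 - δ)⁻¹) ≤ τ / (2 + τ) * x * c₁ := by
      rw [hK₁]
      have h2 : τ / (2 + τ) * (e / (1 - δ) / 2) ≤ τ / (2 + τ) * x :=
        mul_le_mul_of_nonneg_left hxlow (by positivity)
      calc τ / (2 + τ) * c₁ / 2 * (e * (1 - δ)⁻¹)
          = τ / (2 + τ) * (e / (1 - δ) / 2) * c₁ := by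
            rw [div_eq_mul_inv e (1-δ)]; ring
        _ ≤ τ / (2 + τ) * x * c₁ := mul_le_mul_of_nonneg_right h2 hc₁0.le
    calc K₁ * (e * (1 - δ)⁻¹) ≤ τ / (2 + τ) * x * c₁ := hstep
      _ ≤ (1 - (1 + x) ^ (-τ)) * δ ^ (α - 1) := by
          apply mul_le_mul hlow (rpow_lower hα hδ.1.le hδ'.2.le hδ'.1) hc₁0.le
          nlinarith [Real.rpow_nonneg (show (0:ℝ) ≤ 1 + x by linarith) (-τ), hlow,
            mul_nonneg (div_nonneg hτ.le (by linarith : (0:ℝ) ≤ 2 + τ)) hx0]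
  -- integral over S of the lower bound
  have hIoo : (1/2:ℝ) ≤ 1 - e := by linarith
  have hcont : ContinuousOn (fun δ : ℝ => K₁ * (e * (1 - δ)⁻¹))
      (Set.Icc (1/2:ℝ) (1 - e)) := by
    apply ContinuousOn.mul continuousOn_const
    apply ContinuousOn.mul continuousOn_const
    apply ContinuousOn.inv₀ ((continuous_const.sub continuous_id).continuousOn)
    intro y hy
    have h2 : y ≤ 1 - e := hy.2
    have h3 : (0:ℝ) < 1 - y := by linarith
    exact h3.ne'
  have hinv : IntegrableOn (fun δ : ℝ => K₁ * (e * (1 - δ)⁻¹)) (Set.Ioo (1/2:ℝ) (1 - e)) :=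
    hcont.integrableOn_Icc.mono_set Set.Ioo_subset_Icc_self
  have hg := intOn_g hτ hα θ
  have hmono1 : (∫ δ in Set.Ioo (1/2:ℝ) (1 - e), K₁ * (e * (1 - δ)⁻¹))
      ≤ ∫ δ in Set.Ioo (1/2:ℝ) (1 - e),
          (1 - ((1 - δ) / (1 - δ * Real.cos θ)) ^ τ) * δ ^ (α - 1) :=
    setIntegral_mono_on hinv (hg.mono_set hS) measurableSet_Ioo hpt
  have hmono2 : (∫ δ in Set.Ioo (1/2:ℝ) (1 - e),
          (1 - ((1 - δ) / (1 - δ * Real.cos θ)) ^ τ) * δ ^ (α - 1))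
      ≤ ∫ δ in Set.Ioo (0:ℝ) 1,
          (1 - ((1 - δ) / (1 - δ * Real.cos θ)) ^ τ) * δ ^ (α - 1) := by
    apply setIntegral_mono_set hg
    · rw [EventuallyLE, ae_restrict_iff' measurableSet_Ioo]
      filter_upwards with δ hδ
      exact mul_nonneg (by
        have := Real.rpow_le_one (r_nonneg θ hδ) (r_le_one θ hδ) hτ.le; linarith)
        (Real.rpow_nonneg hδ.1.le _)
    · exact HasSubset.Subset.eventuallyLE hS
  -- compute the left integral
  have hcalc : (∫ δ in Set.Ioo (1/2:ℝ) (1 - e), K₁ * (e * (1 - δ)⁻¹))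
      = K₁ * (e * Real.log ((1/2) / e)) := by
    rw [integral_const_mul]
    congr 1
    rw [integral_const_mul]
    congr 1
    rw [← integral_Ioc_eq_integral_Ioo, ← intervalIntegral.integral_of_le hIoo]
    have h := intervalIntegral.integral_comp_sub_left (a := (1/2:ℝ)) (b := 1 - e)
      (fun y : ℝ => y⁻¹) 1
    simp only [sub_sub_cancel] at h
    rw [h, integral_inv_of_pos he0 (by norm_num : (0:ℝ) < 1 - 1/2)]
    norm_num
  rw [D_repr hτ hα θ]
  calc α * K₁ * (e * Real.log ((1/2) / e))
      = α * (K₁ * (e * Real.log ((1/2) / e))) := by ring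
    _ ≤ α * ∫ δ in Set.Ioo (0:ℝ) 1,
          (1 - ((1 - δ) / (1 - δ * Real.cos θ)) ^ τ) * δ ^ (α - 1) := by
        apply mul_le_mul_of_nonneg_left _ hα.le
        rw [← hcalc]
        exact le_trans hmono1 hmono2

lemma D_nonneg (hτ : 0 < τ) (hα : 0 < α) (θ : ℝ) : 0 ≤ Ffam τ α 1 0 - Ffam τ α 1 θ := by
  rw [D_repr hτ hα θ]
  apply mul_nonneg hα.le
  apply setIntegral_nonneg measurableSet_Ioo
  intro δ hδ
  apply mul_nonneg _ (Real.rpow_nonneg hδ.1.le _)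
  have := Real.rpow_le_one (r_nonneg θ hδ) (r_le_one θ hδ) hτ.le
  linarith


end AuxLemmas

/-- For `ν = 1` the fractal index of the `F`-family does not exist: for no `a ∈ (0,2]`
does `(F(0)-F(θ))/θ^a` converge to a positive constant as `θ → 0⁺`; more precisely,
the limit is `0` for `a ∈ (0,2)` and `+∞` for `a = 2`. -/
theorem Ffam_fractal_index_of_nu_eq_one (τ α : ℝ) (hτ : 0 < τ) (hα : 0 < α) :
    (∀ a ∈ Set.Ioc (0:ℝ) 2, ∀ b : ℝ, 0 < b →
      ¬ Filter.Tendsto (fun θ : ℝ => (Ffam τ α 1 0 - Ffam τ α 1 θ) / θ ^ a)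
          (nhdsWithin 0 (Set.Ioi 0)) (nhds b)) ∧
    (∀ a ∈ Set.Ioo (0:ℝ) 2,
      Filter.Tendsto (fun θ : ℝ => (Ffam τ α 1 0 - Ffam τ α 1 θ) / θ ^ a)
        (nhdsWithin 0 (Set.Ioi 0)) (nhds 0)) ∧
    Filter.Tendsto (fun θ : ℝ => (Ffam τ α 1 0 - Ffam τ α 1 θ) / θ ^ (2:ℝ))
      (nhdsWithin 0 (Set.Ioi 0)) Filter.atTop := by
  have hmem : Set.Ioo (0:ℝ) 1 ∈ nhdsWithin (0:ℝ) (Set.Ioi 0) :=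
    Ioo_mem_nhdsGT_of_mem ⟨le_refl 0, zero_lt_one⟩
  have hπ : (1:ℝ) ≤ π := by linarith [Real.pi_gt_three]
  -- basic facts for θ ∈ Ioo 0 1
  have hfacts : ∀ θ ∈ Set.Ioo (0:ℝ) 1,
      2/π^2 * θ^2 ≤ 1 - Real.cos θ ∧ 1 - Real.cos θ ≤ θ^2/2 := by
    intro θ hθ
    constructor
    · have h := Real.cos_le_one_sub_mul_cos_sq
        (x := θ) (by rw [abs_of_pos hθ.1]; linarith [hθ.2])
      linarith
    · linarith [Real.one_sub_sq_div_two_le_cos (x := θ)]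
  -- Part 3
  have part3 : Filter.Tendsto (fun θ : ℝ => (Ffam τ α 1 0 - Ffam τ α 1 θ) / θ ^ (2:ℝ))
      (nhdsWithin 0 (Set.Ioi 0)) Filter.atTop := by
    obtain ⟨K, hK0, hK⟩ := D_lower hτ hα
    have hKc : (0:ℝ) < K * (2/π^2) := by positivity
    have h1 : Filter.Tendsto (fun θ : ℝ => 1 - Real.cos θ)
        (nhdsWithin 0 (Set.Ioi 0)) (nhdsWithin 0 (Set.Ioi 0)) := by
      rw [tendsto_nhdsWithin_iff]
      constructor
      · have hc : Continuous fun θ : ℝ => 1 - Real.cos θ :=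
          continuous_const.sub Real.continuous_cos
        have := hc.tendsto (0:ℝ)
        simpa using this.mono_left nhdsWithin_le_nhds
      · filter_upwards [hmem] with θ hθ
        have hθ2 : 0 < θ^2 := pow_pos hθ.1 2
        have hpp : (0:ℝ) < 2/π^2 := by positivity
        have : (0:ℝ) < 2/π^2 * θ^2 := mul_pos hpp hθ2
        exact Set.mem_Ioi.mpr (by linarith [(hfacts θ hθ).1])
    have h2 : Filter.Tendsto (fun y : ℝ => (1/2)/y) (nhdsWithin (0:ℝ) (Set.Ioi 0)) atTop := by
      have := tendsto_inv_nhdsGT_zero.const_mul_atTop (show (0:ℝ) < 1/2 by norm_num)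
      simpa [div_eq_mul_inv] using this
    have h3 := Real.tendsto_log_atTop.comp (h2.comp h1)
    have T1 := h3.const_mul_atTop hKc
    apply tendsto_atTop_mono' _ _ T1
    filter_upwards [hmem] with θ hθ
    obtain ⟨hlo, hup⟩ := hfacts θ hθ
    set e : ℝ := 1 - Real.cos θ with hee
    have hθ2 : (0:ℝ) < θ^2 := pow_pos hθ.1 2
    have he0 : 0 < e := by
      have hpp : (0:ℝ) < 2/π^2 := by positivity
      have : (0:ℝ) < 2/π^2 * θ^2 := mul_pos hpp hθ2
      linarith
    have he2 : e < 1/2 := by nlinarith [hθ.2, hθ.1]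
    have hL0 : 0 ≤ Real.log ((1/2)/e) := by
      apply Real.log_nonneg
      rw [le_div_iff₀ he0]; linarith
    have hpow : θ ^ (2:ℝ) = θ^2 := by
      rw [show (2:ℝ) = ((2:ℕ):ℝ) by norm_num, Real.rpow_natCast]
    show K * (2/π^2) * Real.log ((1/2)/(1 - Real.cos θ))
        ≤ (Ffam τ α 1 0 - Ffam τ α 1 θ) / θ ^ (2:ℝ)
    rw [hpow, le_div_iff₀ hθ2, ← hee]
    have hchain : K * (2/π^2) * Real.log ((1/2)/e) * θ^2 ≤ K * (e * Real.log ((1/2)/e)) := by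
      nlinarith [mul_nonneg (mul_nonneg hK0.le hL0) (sub_nonneg.mpr hlo)]
    exact le_trans hchain (hK θ he0 he2)
  -- Part 2
  have part2 : ∀ a ∈ Set.Ioo (0:ℝ) 2,
      Filter.Tendsto (fun θ : ℝ => (Ffam τ α 1 0 - Ffam τ α 1 θ) / θ ^ a)
        (nhdsWithin 0 (Set.Ioi 0)) (nhds 0) := by
    intro a ha
    obtain ⟨ha0, ha2⟩ := ha
    set s : ℝ := (a + 2)/4 with hs
    have hs0 : 0 < s := by rw [hs]; linarith
    have hs1 : s < 1 := by rw [hs]; linarith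
    have hb : 0 < 2*s - a := by rw [hs]; linarith
    obtain ⟨C, hC0, hC⟩ := D_upper hτ hα hs0 hs1
    have hlim : Filter.Tendsto (fun θ : ℝ => (C / 2^s) * θ ^ (2*s - a))
        (nhdsWithin (0:ℝ) (Set.Ioi 0)) (nhds 0) := by
      have hcont := Real.continuousAt_rpow_const 0 (2*s - a) (Or.inr hb.le)
      have : Filter.Tendsto (fun x : ℝ => x ^ (2*s - a)) (nhdsWithin (0:ℝ) (Set.Ioi 0))
          (nhds ((0:ℝ) ^ (2*s - a))) :=
        hcont.tendsto.mono_left nhdsWithin_le_nhds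
      rw [Real.zero_rpow hb.ne'] at this
      have hmul := this.const_mul (C / 2^s)
      simpa using hmul
    apply squeeze_zero' (g := fun θ : ℝ => (C / 2^s) * θ ^ (2*s - a))
    · filter_upwards [hmem, self_mem_nhdsWithin] with θ hθ hθ0
      exact div_nonneg (D_nonneg hτ hα θ) (Real.rpow_nonneg (le_of_lt hθ0) a)
    · filter_upwards [hmem, self_mem_nhdsWithin] with θ hθ hθ0
      have hθ0' : (0:ℝ) < θ := hθ0
      obtain ⟨hlo, hup⟩ := hfacts θ hθ
      have he0 : (0:ℝ) ≤ 1 - Real.cos θ := by linarith [Real.cos_le_one θ]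
      have h4 : Ffam τ α 1 0 - Ffam τ α 1 θ ≤ C * (θ^2/2) ^ s :=
        le_trans (hC θ) (mul_le_mul_of_nonneg_left
          (Real.rpow_le_rpow he0 hup hs0.le) hC0)
      have h5 : (θ^2/2 : ℝ) ^ s = θ ^ (2*s) / 2^s := by
        rw [Real.div_rpow (sq_nonneg θ) (by norm_num : (0:ℝ) ≤ 2)]
        congr 1
        rw [← Real.rpow_natCast θ 2, ← Real.rpow_mul hθ0'.le]
        norm_num
      rw [div_le_iff₀ (Real.rpow_pos_of_pos hθ0' a)]
      calc Ffam τ α 1 0 - Ffam τ α 1 θ ≤ C * (θ^2/2) ^ s := h4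
        _ = (C / 2^s) * θ ^ (2*s) := by rw [h5]; ring
        _ = (C / 2^s) * (θ ^ (2*s - a) * θ ^ a) := by
            rw [← Real.rpow_add hθ0']; ring_nf
        _ = (C / 2^s) * θ ^ (2*s - a) * θ ^ a := by ring
    · exact hlim
  refine ⟨?_, part2, part3⟩
  intro a ha b hb hT
  rcases eq_or_lt_of_le ha.2 with h2 | h2
  · rw [h2] at hT
    exact not_tendsto_nhds_of_tendsto_atTop part3 b hT
  · have h0 := part2 a ⟨ha.1, h2⟩
    have := tendsto_nhds_unique hT h0
    linarith
end
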